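/- Let 2 ≤ e ≤ m be integers and let T be a numerical semigroup with multiplicity m and embedding dimension e. Define a sequence by T₀ = T and, as long as M(Tₙ) − m > m, T_{n+1} = ⟨(msg(Tₙ) ∖ {M(Tₙ)}) ∪ {M(Tₙ) − m}⟩. Then each Tₙ is a numerical semigroup with multiplicity m and embedding dimension e satisfying Tₙ ⊊ T_{n+1}, and there exists k ∈ ℕ such that T_k = φ(T) is packed; in particular T ⊆ φ(T). -/

import Mathlib

open scoped Pointwise

/-- A numerical semigroup: an additive submonoid of ℕ with finite complement. -/
def IsNumericalSemigroup (S : Set ℕ) : Prop :=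
  0 ∈ S ∧ (∀ a ∈ S, ∀ b ∈ S, a + b ∈ S) ∧ Sᶜ.Finite

/-- Multiplicity: the least positive element. -/
noncomputable def mult (S : Set ℕ) : ℕ := sInf (S \ {0})

/-- Minimal system of generators: (S∖{0}) ∖ ((S∖{0})+(S∖{0})). -/
def msg (S : Set ℕ) : Set ℕ := (S \ {0}) \ ((S \ {0}) + (S \ {0}))

/-- Embedding dimension: cardinality of the minimal system of generators. -/
noncomputable def edim (S : Set ℕ) : ℕ := (msg S).ncard

/-- The submonoid of (ℕ,+) generated by a set, as a set. -/
def genSet (B : Set ℕ) : Set ℕ := (AddSubmonoid.closure B : Set ℕ)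

/-- Packed numerical semigroup: msg(S) ⊆ {m(S),…,2m(S)−1}. -/
def IsPacked (S : Set ℕ) : Prop := msg S ⊆ Set.Icc (mult S) (2 * mult S - 1)

/-- L(m,e): numerical semigroups with multiplicity m and embedding dimension e. -/
def Lset (m e : ℕ) : Set (Set ℕ) :=
  {S | IsNumericalSemigroup S ∧ mult S = m ∧ edim S = e}

/-- C(m,e): packed numerical semigroups in L(m,e). -/
def Cset (m e : ℕ) : Set (Set ℕ) := {S ∈ Lset m e | IsPacked S}

/-- φ(S): the monoid generated by {m + (x mod m) : x ∈ msg(S)}, m = mult S. -/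
noncomputable def phi (S : Set ℕ) : Set ℕ :=
  genSet ((fun x => mult S + x % mult S) '' msg S)

/-- The class [S] = {T ∈ L(m,e) : φ(T) = φ(S)}. -/
def classOf (m e : ℕ) (S : Set ℕ) : Set (Set ℕ) := {T ∈ Lset m e | phi T = phi S}

/-- Frobenius number: the largest element of the complement. -/
noncomputable def Frob (S : Set ℕ) : ℕ := sSup Sᶜ

/-- Genus: the cardinality of the complement. -/
noncomputable def genus (S : Set ℕ) : ℕ := Sᶜ.ncard

/-- The Apéry set of n in S. -/
def Ap (S : Set ℕ) (n : ℕ) : Set ℕ := {s ∈ S | ¬ ∃ t ∈ S, s = t + n}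

/-- Minimal elements of a set in a partial order. -/
def minimalsOf {β : Type*} [PartialOrder β] (X : Set β) : Set β :=
  {x ∈ X | ∀ y ∈ X, y ≤ x → y = x}

lemma genSet_subset_of_closed {S B : Set ℕ} (h0 : 0 ∈ S)
    (hadd : ∀ a ∈ S, ∀ b ∈ S, a + b ∈ S) (hB : B ⊆ S) : genSet B ⊆ S := by
  intro x hx
  have hx' : x ∈ AddSubmonoid.closure B := hx
  clear hx
  induction hx' using AddSubmonoid.closure_induction with
  | mem y h => exact hB h
  | zero => exact h0
  | add y z hy hz py pz => exact hadd y py z pz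

lemma ns_diff_nonempty {S : Set ℕ} (hS : IsNumericalSemigroup S) : (S \ {0}).Nonempty := by
  have h := hS.2.2.infinite_compl
  rw [compl_compl] at h
  exact (h.diff (Set.finite_singleton 0)).nonempty

lemma mult_mem_diff {S : Set ℕ} (hS : IsNumericalSemigroup S) : mult S ∈ S \ {0} :=
  Nat.sInf_mem (ns_diff_nonempty hS)

lemma mult_le {S : Set ℕ} {x : ℕ} (hx : x ∈ S \ {0}) : mult S ≤ x := Nat.sInf_le hx

lemma mult_mem_msg {S : Set ℕ} (hS : IsNumericalSemigroup S) : mult S ∈ msg S := by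
  refine ⟨mult_mem_diff hS, ?_⟩
  intro hmem
  obtain ⟨a, ha, b, hb, hab⟩ := Set.mem_add.mp hmem
  have h1 := mult_le ha
  have h2 := mult_le hb
  have ha0 : a ≠ 0 := ha.2
  have hb0 : b ≠ 0 := hb.2
  have hm0 : mult S ≠ 0 := (mult_mem_diff hS).2
  omega

lemma genSet_msg {S : Set ℕ} (hS : IsNumericalSemigroup S) : genSet (msg S) = S := by
  apply subset_antisymm
  · exact genSet_subset_of_closed hS.1 hS.2.1 (fun x hx => hx.1.1)
  · have key : ∀ s, s ∈ S → s ∈ AddSubmonoid.closure (msg S) := by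
      intro s
      induction s using Nat.strong_induction_on with
      | _ s ih =>
        intro hs
        rcases eq_or_ne s 0 with rfl | hs0
        · exact AddSubmonoid.zero_mem _
        by_cases hmsg : s ∈ msg S
        · exact AddSubmonoid.subset_closure hmsg
        · have hsum : s ∈ (S \ {0}) + (S \ {0}) := by
            by_contra h
            exact hmsg ⟨⟨hs, hs0⟩, h⟩
          obtain ⟨a, ha, b, hb, hab⟩ := Set.mem_add.mp hsum
          have ha0 : a ≠ 0 := ha.2
          have hb0 : b ≠ 0 := hb.2
          have h1 : a < s := by omega
          have h2 : b < s := by omega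
          have := AddSubmonoid.add_mem _ (ih a h1 ha.1) (ih b h2 hb.1)
          rwa [hab] at this
    exact fun s hs => key s hs

lemma step_lemma {m e : ℕ} (h2 : 2 ≤ e) (hem : e ≤ m) {S : Set ℕ}
    (hS : S ∈ Lset m e) (hfin : (msg S).Finite) (hM2m : 2 * m < sSup (msg S)) :
    genSet ((msg S \ {sSup (msg S)}) ∪ {sSup (msg S) - m}) ∈ Lset m e ∧
    (msg (genSet ((msg S \ {sSup (msg S)}) ∪ {sSup (msg S) - m}))).Finite ∧
    phi (genSet ((msg S \ {sSup (msg S)}) ∪ {sSup (msg S) - m})) = phi S ∧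
    S ⊂ genSet ((msg S \ {sSup (msg S)}) ∪ {sSup (msg S) - m}) ∧
    sSup (msg (genSet ((msg S \ {sSup (msg S)}) ∪ {sSup (msg S) - m}))) < sSup (msg S) := by
  obtain ⟨hNS, hm, he⟩ := hS
  set M := sSup (msg S) with hMdef
  set A := msg S \ {M} with hAdef
  set B := A ∪ {M - m} with hBdef
  set S' := genSet B with hS'def
  have hmpos : 0 < m := by omega
  have hne : (msg S).Nonempty := by
    rcases Set.eq_empty_or_nonempty (msg S) with h | h
    · exfalso; rw [edim, h, Set.ncard_empty] at he; omega
    · exact h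
  have hMmem : M ∈ msg S := hne.csSup_mem hfin
  have hbdd : ∀ x ∈ msg S, x ≤ M := fun x hx => le_csSup hfin.bddAbove hx
  have hmm : m ∈ msg S := hm ▸ mult_mem_msg hNS
  have hmS : m ∈ S := hmm.1.1
  have hmA : m ∈ A := ⟨hmm, by simp; omega⟩
  have hlb : ∀ x ∈ S \ ({0} : Set ℕ), m ≤ x := fun x hx => hm ▸ mult_le hx
  have hMS : M ∈ S := hMmem.1.1
  have hMmnS : M - m ∉ S := by
    intro h
    exact hMmem.2 ⟨M - m, ⟨h, by simp; omega⟩, m, ⟨hmS, by simp; omega⟩,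
      by show M - m + m = M; omega⟩
  have hBS' : B ⊆ S' := AddSubmonoid.subset_closure
  have hBlb : ∀ b ∈ B, m ≤ b := by
    rintro b (hb | hb)
    · exact hlb b hb.1.1
    · simp only [Set.mem_singleton_iff] at hb; omega
  -- claim1 : positive elements of S' are ≥ m
  have claim1 : ∀ x ∈ S', x = 0 ∨ m ≤ x := by
    intro x hx
    have hx' : x ∈ AddSubmonoid.closure B := hx
    clear hx
    induction hx' using AddSubmonoid.closure_induction with
    | mem y h => exact Or.inr (hBlb y h)
    | zero => exact Or.inl rfl
    | add y z hy hz py pz => rcases py with h | h <;> rcases pz with h' | h' <;> omega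
  -- claim2 : every element of S' is in ⟨A⟩ or is y + (M-m)
  have claim2 : ∀ x ∈ S', x ∈ genSet A ∨ ∃ y ∈ S', x = y + (M - m) := by
    intro x hx
    have hx' : x ∈ AddSubmonoid.closure B := hx
    clear hx
    induction hx' using AddSubmonoid.closure_induction with
    | mem y h =>
      rcases h with h | h
      · exact Or.inl (AddSubmonoid.subset_closure h)
      · simp only [Set.mem_singleton_iff] at h
        exact Or.inr ⟨0, AddSubmonoid.zero_mem _, by omega⟩
    | zero => exact Or.inl (AddSubmonoid.zero_mem _)
    | add y z hy hz py pz =>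
      rcases py with h | ⟨w, hw, hweq⟩
      · rcases pz with h' | ⟨w, hw, hweq⟩
        · exact Or.inl (AddSubmonoid.add_mem _ h h')
        · exact Or.inr ⟨y + w, AddSubmonoid.add_mem _ hy hw, by omega⟩
      · exact Or.inr ⟨w + z, AddSubmonoid.add_mem _ hw hz, by omega⟩
  have hAS : genSet A ⊆ S :=
    genSet_subset_of_closed hNS.1 hNS.2.1 (fun x hx => hx.1.1.1)
  -- S ⊆ S'
  have hmsgS' : msg S ⊆ S' := by
    intro x hx
    rcases eq_or_ne x M with rfl | hxo
    · have : (M - m) + m ∈ S' :=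
        AddSubmonoid.add_mem _ (hBS' (Or.inr rfl)) (hBS' (Or.inl hmA))
      have hEq : (M - m) + m = M := by omega
      rwa [hEq] at this
    · exact hBS' (Or.inl ⟨hx, hxo⟩)
  have hSS' : S ⊆ S' := by
    rw [← genSet_msg hNS]
    exact AddSubmonoid.closure_le.mpr hmsgS'
  have hssub : S ⊂ S' := by
    rw [Set.ssubset_def]
    exact ⟨hSS', fun h => hMmnS (h (hBS' (Or.inr rfl)))⟩
  -- S' is a numerical semigroup
  have hNS' : IsNumericalSemigroup S' := by
    refine ⟨AddSubmonoid.zero_mem _, fun a ha b hb => AddSubmonoid.add_mem _ ha hb, ?_⟩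
    exact hNS.2.2.subset (Set.compl_subset_compl.mpr hSS')
  -- mult S' = m
  have hmS' : m ∈ S' \ ({0} : Set ℕ) := ⟨hBS' (Or.inl hmA), by simp; omega⟩
  have hmultS' : mult S' = m := by
    apply le_antisymm (Nat.sInf_le hmS')
    apply le_csInf ⟨m, hmS'⟩
    rintro x ⟨hx1, hx2⟩
    rcases claim1 x hx1 with h | h
    · exact absurd h hx2
    · exact h
  -- msg S' = B
  have claim3 : ∀ x ∈ S', x = 0 ∨ x ∈ B ∨ x ∈ (S' \ {0}) + (S' \ {0}) := by
    intro x hx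
    have hx' : x ∈ AddSubmonoid.closure B := hx
    clear hx
    induction hx' using AddSubmonoid.closure_induction with
    | mem y h => exact Or.inr (Or.inl h)
    | zero => exact Or.inl rfl
    | add y z hy hz py pz =>
      rcases eq_or_ne y 0 with rfl | hy0
      · simpa using pz
      rcases eq_or_ne z 0 with rfl | hz0
      · simpa using py
      exact Or.inr (Or.inr ⟨y, ⟨hy, hy0⟩, z, ⟨hz, hz0⟩, rfl⟩)
  have hmsgB : msg S' = B := by
    apply subset_antisymm
    · rintro x ⟨⟨hx1, hx0⟩, hx2⟩
      rcases claim3 x hx1 with h | h | h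
      · exact absurd h hx0
      · exact h
      · exact absurd h hx2
    · intro b hb
      have hbS' : b ∈ S' := hBS' hb
      have hb0 : b ≠ 0 := by have := hBlb b hb; omega
      refine ⟨⟨hbS', hb0⟩, ?_⟩
      rintro ⟨s, ⟨hs1, hs0⟩, t, ⟨ht1, ht0⟩, hst⟩
      change s + t = b at hst
      have hsm : m ≤ s := by
        rcases claim1 s hs1 with h | h
        · exact absurd h hs0
        · exact h
      have htm : m ≤ t := by
        rcases claim1 t ht1 with h | h
        · exact absurd h ht0
        · exact h
      rcases hb with hb | hb
      · -- b ∈ A, b < M, but any decomposition forces b ≥ M or b ∈ sums of S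
        have hbltM : b < M := by
          have h1 := hbdd b hb.1
          have h2 : b ≠ M := hb.2
          omega
        rcases claim2 s hs1 with hsl | ⟨y, hy, hyeq⟩
        · rcases claim2 t ht1 with htl | ⟨y, hy, hyeq⟩
          · exact hb.1.2 ⟨s, ⟨hAS hsl, hs0⟩, t, ⟨hAS htl, ht0⟩, hst⟩
          · omega
        · omega
      · -- b = M - m
        simp only [Set.mem_singleton_iff] at hb
        rcases claim2 s hs1 with hsl | ⟨y, hy, hyeq⟩
        · rcases claim2 t ht1 with htl | ⟨y, hy, hyeq⟩
          · refine absurd (hMmem.2 ?_) (fun h => h)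
            · exact ⟨s, ⟨hAS hsl, hs0⟩, t + m, ⟨hNS.2.1 t (hAS htl) m hmS, by simp; omega⟩,
                by show s + (t + m) = M; omega⟩
          · omega
        · omega
  -- cardinalities
  have hMmnA : M - m ∉ A := fun h => hMmnS h.1.1.1
  have hAfin : A.Finite := hfin.diff
  have hBfin : B.Finite := hAfin.union (Set.finite_singleton _)
  have hcardA : A.ncard = e - 1 := by
    rw [hAdef, Set.ncard_diff_singleton_of_mem hMmem]
    rw [edim] at he; omega
  have hcardB : B.ncard = e := by
    rw [hBdef, Set.union_singleton, Set.ncard_insert_of_notMem hMmnA hAfin, hcardA]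
    omega
  -- phi S' = phi S
  have hmsgSdecomp : msg S = insert M A := by
    rw [hAdef, Set.insert_diff_singleton, Set.insert_eq_of_mem hMmem]
  have hphi : phi S' = phi S := by
    rw [phi, phi, hmultS', hm, hmsgB, hBdef, Set.union_singleton, hmsgSdecomp,
      Set.image_insert_eq, Set.image_insert_eq]
    have hmod : (M - m) % m = M % m := by
      conv_rhs => rw [show M = (M - m) + m by omega]
      rw [Nat.add_mod_right]
    rw [hmod]
  -- sSup decreases
  have hBne : B.Nonempty := ⟨m, Or.inl hmA⟩
  have hsupB : sSup B ∈ B := hBne.csSup_mem hBfin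
  have hsupBlt : sSup B < M := by
    rcases hsupB with h | h
    · have h1 := hbdd _ h.1
      have h2 : sSup B ≠ M := h.2
      omega
    · simp only [Set.mem_singleton_iff] at h; omega
  exact ⟨⟨hNS', hmultS', by rw [edim, hmsgB]; exact hcardB⟩,
    by rw [hmsgB]; exact hBfin, hphi, hssub, by rw [hmsgB]; exact hsupBlt⟩

lemma phi_packed {S : Set ℕ} (hNS : IsNumericalSemigroup S) (hp : IsPacked S) : phi S = S := by
  have hpos : mult S ≠ 0 := (mult_mem_diff hNS).2
  have himg : (fun x => mult S + x % mult S) '' msg S = msg S := by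
    have hcong : ∀ x ∈ msg S, (fun x => mult S + x % mult S) x = id x := by
      intro x hx
      obtain ⟨h1, h2⟩ := Set.mem_Icc.mp (hp hx)
      simp only [id]
      have hmod : x % mult S = x - mult S := by
        rw [Nat.mod_eq_sub_mod h1, Nat.mod_eq_of_lt (by omega)]
      omega
    rw [Set.image_congr hcong, Set.image_id]
  rw [phi, himg, genSet_msg hNS]


/-- starting from T ∈ L(m,e), the sequence T₀ = T,
T_{n+1} = ⟨(msg(Tₙ) ∖ {M(Tₙ)}) ∪ {M(Tₙ) − m}⟩ as long as M(Tₙ) − m > m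
(and constant afterwards), stays in L(m,e), is strictly increasing while
the step condition holds, and reaches the packed semigroup φ(T);
in particular T ⊆ φ(T). Here M(Tₙ) = sSup (msg (Tseq n)). -/
theorem stmt8 (m e : ℕ) (h2 : 2 ≤ e) (hem : e ≤ m) (T : Set ℕ) (hT : T ∈ Lset m e)
    (Tseq : ℕ → Set ℕ) (h0 : Tseq 0 = T)
    (hstep : ∀ k, Tseq (k + 1) =
      if m < sSup (msg (Tseq k)) - m then
        genSet ((msg (Tseq k) \ {sSup (msg (Tseq k))}) ∪ {sSup (msg (Tseq k)) - m})
      else Tseq k) :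
    (∀ k, Tseq k ∈ Lset m e) ∧
    (∀ k, m < sSup (msg (Tseq k)) - m → Tseq k ⊂ Tseq (k + 1)) ∧
    (∃ k, Tseq k = phi T ∧ IsPacked (Tseq k)) ∧
    T ⊆ phi T := by
  have hmpos : 0 < m := by omega
  have hInv : ∀ k, Tseq k ∈ Lset m e ∧ (msg (Tseq k)).Finite ∧
      phi (Tseq k) = phi T ∧ T ⊆ Tseq k := by
    intro k
    induction k with
    | zero =>
      refine ⟨h0 ▸ hT, ?_, by rw [h0], by rw [h0]⟩
      rw [h0]
      apply Set.finite_of_ncard_ne_zero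
      have hed := hT.2.2
      rw [edim] at hed
      omega
    | succ k ih =>
      obtain ⟨hk, hkfin, hkphi, hkT⟩ := ih
      by_cases hc : m < sSup (msg (Tseq k)) - m
      · have h2m : 2 * m < sSup (msg (Tseq k)) := by omega
        have hst := step_lemma h2 hem hk hkfin h2m
        rw [hstep k, if_pos hc]
        exact ⟨hst.1, hst.2.1, hst.2.2.1.trans hkphi, hkT.trans hst.2.2.2.1.subset⟩
      · rw [hstep k, if_neg hc]
        exact ⟨hk, hkfin, hkphi, hkT⟩
  have hstrict : ∀ k, m < sSup (msg (Tseq k)) - m → Tseq k ⊂ Tseq (k + 1) := by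
    intro k hc
    obtain ⟨hk, hkfin, -, -⟩ := hInv k
    have h2m : 2 * m < sSup (msg (Tseq k)) := by omega
    have hst := step_lemma h2 hem hk hkfin h2m
    rw [hstep k, if_pos hc]
    exact hst.2.2.2.1
  have hterm : ∃ k, ¬ (m < sSup (msg (Tseq k)) - m) := by
    by_contra h
    push_neg at h
    have hdec : ∀ k, sSup (msg (Tseq (k + 1))) < sSup (msg (Tseq k)) := by
      intro k
      obtain ⟨hk, hkfin, -, -⟩ := hInv k
      have hc := h k
      have h2m : 2 * m < sSup (msg (Tseq k)) := by omega
      have hst := step_lemma h2 hem hk hkfin h2m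
      rw [hstep k, if_pos hc]
      exact hst.2.2.2.2
    have hle : ∀ k, sSup (msg (Tseq k)) + k ≤ sSup (msg (Tseq 0)) := by
      intro k
      induction k with
      | zero => omega
      | succ k ih =>
        have := hdec k
        omega
    have := hle (sSup (msg (Tseq 0)) + 1)
    omega
  obtain ⟨k0, hk0⟩ := hterm
  obtain ⟨⟨hNS0, hm0, he0⟩, hfin0, hphi0, hT0⟩ := hInv k0
  have hbdd0 : ∀ x ∈ msg (Tseq k0), x ≤ sSup (msg (Tseq k0)) :=
    fun x hx => le_csSup hfin0.bddAbove hx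
  have hMle : sSup (msg (Tseq k0)) ≤ 2 * m := by omega
  have hpacked : IsPacked (Tseq k0) := by
    intro x hx
    rw [hm0]
    have h1 : m ≤ x := hm0 ▸ mult_le hx.1
    have hle2 : x ≤ 2 * m := le_trans (hbdd0 x hx) hMle
    have hne2 : x ≠ 2 * m := by
      intro hEq
      apply hx.2
      have hmmem : m ∈ Tseq k0 \ {0} := hm0 ▸ mult_mem_diff hNS0
      exact ⟨m, hmmem, m, hmmem, by show m + m = x; omega⟩
    exact Set.mem_Icc.mpr ⟨h1, by omega⟩
  have hfix : Tseq k0 = phi T := by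
    rw [← hphi0, phi_packed hNS0 hpacked]
  refine ⟨fun k => (hInv k).1, hstrict, ⟨k0, hfix, hpacked⟩, ?_⟩
  rw [← hfix]
  exact hT0
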